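/- Let R be a commutative ring, A a bialgebra over R, and F₁, F₂ two A-module algebras. Then the set of invariants {K ∈ F₁ᵒᵖ ⊗_R F₂ : a • K = ε(a)·K for all a ∈ A} is a unital subalgebra of the algebra F₁ᵒᵖ ⊗_R F₂, i.e. it contains 1 ⊗ 1 and is closed under the multiplication (f₁ ⊗ f₂)·(g₁ ⊗ g₂) = (g₁·f₁) ⊗ (f₂·g₂) (products taken in F₁ and F₂ respectively). -/

import Mathlib

open TensorProduct

/-- Given `R`-linear actions `ρ₁ : A → End F`, `ρ₂ : A → End G`, the action of
`a : A` on `F ⊗[R] G` obtained by restricting the `(A ⊗ A)`-action along the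
comultiplication: `a • (ψ₁ ⊗ ψ₂) = Σ (a₍₁₎ • ψ₁) ⊗ (a₍₂₎ • ψ₂)`. -/
noncomputable def tensorAct (R : Type*) {A F G : Type*} [CommRing R] [Ring A]
    [Bialgebra R A] [AddCommGroup F] [Module R F] [AddCommGroup G] [Module R G]
    (ρ₁ : A →ₗ[R] F →ₗ[R] F) (ρ₂ : A →ₗ[R] G →ₗ[R] G) (a : A) :
    F ⊗[R] G →ₗ[R] F ⊗[R] G :=
  TensorProduct.homTensorHomMap (RingHom.id R) F G F G
    (TensorProduct.map ρ₁ ρ₂ (Coalgebra.comul a))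

/-- The multiplication of the algebra `F₁ᵒᵖ ⊗[R] F₂` on the underlying
`R`-module `F₁ ⊗[R] F₂`:
`(f₁ ⊗ f₂) * (g₁ ⊗ g₂) = (g₁ * f₁) ⊗ (f₂ * g₂)`. -/
noncomputable def opMul (R : Type*) {F G : Type*} [CommRing R] [Ring F]
    [Algebra R F] [Ring G] [Algebra R G] :
    F ⊗[R] G →ₗ[R] F ⊗[R] G →ₗ[R] F ⊗[R] G :=
  (TensorProduct.homTensorHomMap (RingHom.id R) F G F G).comp
    (TensorProduct.map (LinearMap.mul R F).flip (LinearMap.mul R G))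

section Aux

variable (R : Type*) {A F G F₁ F₂ : Type*} [CommRing R] [Ring A] [Bialgebra R A]

section Mod
variable [AddCommGroup F] [Module R F] [AddCommGroup G] [Module R G]

/-- the `(A ⊗ A)`-action on `F ⊗ G`. -/
noncomputable def act2 (ρ₁ : A →ₗ[R] F →ₗ[R] F) (ρ₂ : A →ₗ[R] G →ₗ[R] G) :
    A ⊗[R] A →ₗ[R] (F ⊗[R] G →ₗ[R] F ⊗[R] G) :=
  (TensorProduct.homTensorHomMap (RingHom.id R) F G F G) ∘ₗ TensorProduct.map ρ₁ ρ₂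

@[simp] theorem act2_tmul (ρ₁ : A →ₗ[R] F →ₗ[R] F) (ρ₂ : A →ₗ[R] G →ₗ[R] G)
    (x y : A) (u : F) (v : G) :
    act2 R ρ₁ ρ₂ (x ⊗ₜ[R] y) (u ⊗ₜ[R] v) = ρ₁ x u ⊗ₜ[R] ρ₂ y v := by
  simp [act2]

theorem tensorAct_eq_act2 (ρ₁ : A →ₗ[R] F →ₗ[R] F) (ρ₂ : A →ₗ[R] G →ₗ[R] G) (a : A) :
    tensorAct R ρ₁ ρ₂ a = act2 R ρ₁ ρ₂ (Coalgebra.comul a) := rfl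

end Mod

variable [Ring F₁] [Algebra R F₁] [Ring F₂] [Algebra R F₂]
variable (ρ₁ : A →ₗ[R] F₁ →ₗ[R] F₁) (ρ₂ : A →ₗ[R] F₂ →ₗ[R] F₂)

/-- the shuffle `(x₁⊗x₂)⊗(y₁⊗y₂) ↦ (x₂⊗y₁)⊗(x₁⊗y₂)`. -/
noncomputable def shuf : (A ⊗[R] A) ⊗[R] (A ⊗[R] A) →ₗ[R] (A ⊗[R] A) ⊗[R] (A ⊗[R] A) :=
  (TensorProduct.tensorTensorTensorComm R A A A A).toLinearMap ∘ₗ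
    (LinearMap.rTensor (A ⊗[R] A) (TensorProduct.comm R A A).toLinearMap)

@[simp] theorem shuf_tmul (x₁ x₂ y₁ y₂ : A) :
    shuf R (A := A) ((x₁ ⊗ₜ[R] x₂) ⊗ₜ[R] (y₁ ⊗ₜ[R] y₂)) =
      (x₂ ⊗ₜ[R] y₁) ⊗ₜ[R] (x₁ ⊗ₜ[R] y₂) := by
  simp [shuf]

/-- `Θ u (K ⊗ L)`, for `u = (x₁⊗x₂)⊗(y₁⊗y₂)`, is `opMul (β(x₂⊗y₁) K) (β(x₁⊗y₂) L)`. -/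
noncomputable def theta :
    (A ⊗[R] A) ⊗[R] (A ⊗[R] A) →ₗ[R]
      ((F₁ ⊗[R] F₂) ⊗[R] (F₁ ⊗[R] F₂) →ₗ[R] F₁ ⊗[R] F₂) :=
  (LinearMap.llcomp R ((F₁ ⊗[R] F₂) ⊗[R] (F₁ ⊗[R] F₂)) ((F₁ ⊗[R] F₂) ⊗[R] (F₁ ⊗[R] F₂))
      (F₁ ⊗[R] F₂) (TensorProduct.lift (opMul R))) ∘ₗ
    (TensorProduct.homTensorHomMap (RingHom.id R) (F₁ ⊗[R] F₂) (F₁ ⊗[R] F₂) (F₁ ⊗[R] F₂) (F₁ ⊗[R] F₂)) ∘ₗ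
    (TensorProduct.map (act2 R ρ₁ ρ₂) (act2 R ρ₁ ρ₂)) ∘ₗ shuf R

@[simp] theorem theta_tmul (x₁ x₂ y₁ y₂ : A) (u v : F₁ ⊗[R] F₂) :
    theta R ρ₁ ρ₂ ((x₁ ⊗ₜ[R] x₂) ⊗ₜ[R] (y₁ ⊗ₜ[R] y₂)) (u ⊗ₜ[R] v) =
      opMul R (act2 R ρ₁ ρ₂ (x₂ ⊗ₜ[R] y₁) u) (act2 R ρ₁ ρ₂ (x₁ ⊗ₜ[R] y₂) v) := by
  simp [theta]

theorem claim1
    (h1cov : ∀ a : A,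
      (LinearMap.mul' R F₁) ∘ₗ tensorAct R ρ₁ ρ₁ a = ρ₁ a ∘ₗ LinearMap.mul' R F₁)
    (h2cov : ∀ a : A,
      (LinearMap.mul' R F₂) ∘ₗ tensorAct R ρ₂ ρ₂ a = ρ₂ a ∘ₗ LinearMap.mul' R F₂)
    (x y : A) :
    (act2 R ρ₁ ρ₂ (x ⊗ₜ[R] y)) ∘ₗ TensorProduct.lift (opMul R) =
      theta R ρ₁ ρ₂ (Coalgebra.comul x ⊗ₜ[R] Coalgebra.comul y) := by
  apply TensorProduct.ext_fourfold'
  intro k₁ k₂ l₁ l₂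
  have inner : (theta R ρ₁ ρ₂).flip ((k₁ ⊗ₜ[R] k₂) ⊗ₜ[R] (l₁ ⊗ₜ[R] l₂)) =
      TensorProduct.map
        ((LinearMap.mul' R F₁) ∘ₗ ((act2 R ρ₁ ρ₁).flip (l₁ ⊗ₜ[R] k₁)))
        ((LinearMap.mul' R F₂) ∘ₗ ((act2 R ρ₂ ρ₂).flip (k₂ ⊗ₜ[R] l₂))) := by
    apply TensorProduct.ext_fourfold'
    intro x₁ x₂ y₁ y₂
    simp [opMul]
  have hx := LinearMap.congr_fun (h1cov x) (l₁ ⊗ₜ[R] k₁)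
  have hy := LinearMap.congr_fun (h2cov y) (k₂ ⊗ₜ[R] l₂)
  simp only [LinearMap.comp_apply, LinearMap.mul'_apply, tensorAct_eq_act2] at hx hy
  have flipped : theta R ρ₁ ρ₂ (Coalgebra.comul x ⊗ₜ[R] Coalgebra.comul y)
        ((k₁ ⊗ₜ[R] k₂) ⊗ₜ[R] (l₁ ⊗ₜ[R] l₂)) =
      (theta R ρ₁ ρ₂).flip ((k₁ ⊗ₜ[R] k₂) ⊗ₜ[R] (l₁ ⊗ₜ[R] l₂))
        (Coalgebra.comul x ⊗ₜ[R] Coalgebra.comul y) := rfl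
  simp only [LinearMap.comp_apply, lift.tmul, flipped, inner, map_tmul,
    LinearMap.comp_apply, hx, hy]
  have : opMul R (k₁ ⊗ₜ[R] k₂) (l₁ ⊗ₜ[R] l₂) = (l₁ * k₁) ⊗ₜ[R] (k₂ * l₂) := by
    simp [opMul]
  rw [this, act2_tmul]
  simp only [LinearMap.flip_apply, hx, hy]

theorem claim1'
    (h1cov : ∀ a : A,
      (LinearMap.mul' R F₁) ∘ₗ tensorAct R ρ₁ ρ₁ a = ρ₁ a ∘ₗ LinearMap.mul' R F₁)
    (h2cov : ∀ a : A,
      (LinearMap.mul' R F₂) ∘ₗ tensorAct R ρ₂ ρ₂ a = ρ₂ a ∘ₗ LinearMap.mul' R F₂)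
    (K L : F₁ ⊗[R] F₂) :
    (act2 R ρ₁ ρ₂).flip (opMul R K L) =
      ((theta R ρ₁ ρ₂).flip (K ⊗ₜ[R] L)) ∘ₗ
        TensorProduct.map Coalgebra.comul Coalgebra.comul := by
  apply TensorProduct.ext'
  intro x y
  have h := LinearMap.congr_fun (claim1 R ρ₁ ρ₂ h1cov h2cov x y) (K ⊗ₜ[R] L)
  simp only [LinearMap.comp_apply, lift.tmul] at h
  simpa only [LinearMap.flip_apply, LinearMap.comp_apply, map_tmul] using h

/-- the rebracketing `(x₁⊗x₂)⊗(y₁⊗y₂) ↦ x₁⊗((x₂⊗y₁)⊗y₂)`. -/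
noncomputable def sigma' (A : Type*) [Ring A] [Bialgebra R A] :
    (A ⊗[R] A) ⊗[R] (A ⊗[R] A) →ₗ[R] A ⊗[R] ((A ⊗[R] A) ⊗[R] A) :=
  (LinearMap.lTensor A (TensorProduct.assoc R A A A).symm.toLinearMap) ∘ₗ
    (TensorProduct.assoc R A A (A ⊗[R] A)).toLinearMap

noncomputable def lamP (K L : F₁ ⊗[R] F₂) :
    A ⊗[R] ((A ⊗[R] A) ⊗[R] A) →ₗ[R] F₁ ⊗[R] F₂ :=
  TensorProduct.lift (opMul R) ∘ₗ
    TensorProduct.map ((act2 R ρ₁ ρ₂).flip K) ((act2 R ρ₁ ρ₂).flip L) ∘ₗ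
    (TensorProduct.leftComm R A (A ⊗[R] A) A).toLinearMap

noncomputable def lamPP (K L : F₁ ⊗[R] F₂) :
    A ⊗[R] (A ⊗[R] A) →ₗ[R] F₁ ⊗[R] F₂ :=
  TensorProduct.lift (opMul R) ∘ₗ
    TensorProduct.map (((act2 R ρ₁ ρ₂).flip K) ∘ₗ Coalgebra.comul)
      ((act2 R ρ₁ ρ₂).flip L) ∘ₗ
    (TensorProduct.leftComm R A A A).toLinearMap

theorem claim2 (K L : F₁ ⊗[R] F₂) :
    (theta R ρ₁ ρ₂).flip (K ⊗ₜ[R] L) = lamP R ρ₁ ρ₂ K L ∘ₗ sigma' R A := by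
  apply TensorProduct.ext_fourfold'
  intro x₁ x₂ y₁ y₂
  simp [lamP, sigma', leftComm_tmul, assoc_tmul]

theorem claim3 :
    sigma' R A ∘ₗ TensorProduct.map Coalgebra.comul Coalgebra.comul ∘ₗ
        Coalgebra.comul =
      LinearMap.lTensor A (LinearMap.rTensor A Coalgebra.comul) ∘ₗ
        LinearMap.lTensor A Coalgebra.comul ∘ₗ Coalgebra.comul := by
  have hmap : (TensorProduct.map (Coalgebra.comul (R := R) (A := A)) Coalgebra.comul) =
      (LinearMap.lTensor (A ⊗[R] A) Coalgebra.comul) ∘ₗ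
        (LinearMap.rTensor A Coalgebra.comul) :=
    by rw [LinearMap.lTensor_comp_rTensor]
  have nat1 : (TensorProduct.assoc R A A (A ⊗[R] A)).toLinearMap ∘ₗ
        LinearMap.lTensor (A ⊗[R] A) (Coalgebra.comul (R := R) (A := A)) =
      LinearMap.lTensor A (LinearMap.lTensor A Coalgebra.comul) ∘ₗ
        (TensorProduct.assoc R A A A).toLinearMap := by
    apply TensorProduct.ext_threefold
    intro x y z
    simp
  have nat2 : (LinearMap.lTensor A (TensorProduct.assoc R A A A).symm.toLinearMap) ∘ₗ
        LinearMap.lTensor A (LinearMap.lTensor A (Coalgebra.comul (R := R) (A := A))) ∘ₗ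
        LinearMap.lTensor A Coalgebra.comul =
      LinearMap.lTensor A (LinearMap.rTensor A Coalgebra.comul) ∘ₗ
        LinearMap.lTensor A Coalgebra.comul := by
    rw [← LinearMap.lTensor_comp, ← LinearMap.lTensor_comp, ← LinearMap.lTensor_comp,
      Coalgebra.coassoc_symm]
  apply LinearMap.ext
  intro a
  have h1 := LinearMap.congr_fun nat1
    ((LinearMap.rTensor A (Coalgebra.comul (R := R))) (Coalgebra.comul a))
  have h2 := LinearMap.congr_fun (Coalgebra.coassoc (R := R) (A := A)) a
  have h3 := LinearMap.congr_fun nat2 (Coalgebra.comul a)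
  simp only [LinearMap.comp_apply] at h1 h2 h3 ⊢
  rw [hmap]
  simp only [sigma', LinearMap.comp_apply]
  rw [h1, h2, h3]

theorem claim4 (K L : F₁ ⊗[R] F₂) :
    lamP R ρ₁ ρ₂ K L ∘ₗ LinearMap.lTensor A (LinearMap.rTensor A Coalgebra.comul) =
      lamPP R ρ₁ ρ₂ K L := by
  apply TensorProduct.ext'
  intro b₁ t
  induction t using TensorProduct.induction_on with
  | zero => simp
  | tmul b₂ b₃ => simp [lamP, lamPP, leftComm_tmul]
  | add s t hs ht =>
    simp only [tmul_add, map_add] at hs ht ⊢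
    rw [hs, ht]

/-- contraction of the middle tensor factor by the counit:
`b₁ ⊗ (b₂ ⊗ b₃) ↦ ε(b₂) • (b₁ ⊗ b₃)`. -/
noncomputable def cmap (A : Type*) [Ring A] [Bialgebra R A] :
    A ⊗[R] (A ⊗[R] A) →ₗ[R] A ⊗[R] A :=
  (TensorProduct.lid R (A ⊗[R] A)).toLinearMap ∘ₗ
    (LinearMap.rTensor (A ⊗[R] A) (Coalgebra.counit (R := R) (A := A))) ∘ₗ
    (TensorProduct.leftComm R A A A).toLinearMap

theorem claim6a (K L : F₁ ⊗[R] F₂) :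
    TensorProduct.lift (opMul R) ∘ₗ
        TensorProduct.map ((Coalgebra.counit (R := R) (A := A)).smulRight K)
          ((act2 R ρ₁ ρ₂).flip L) ∘ₗ
        (TensorProduct.leftComm R A A A).toLinearMap =
      (opMul R K) ∘ₗ ((act2 R ρ₁ ρ₂).flip L) ∘ₗ cmap R A := by
  apply TensorProduct.ext'
  intro b₁ t
  induction t using TensorProduct.induction_on with
  | zero => simp
  | tmul b₂ b₃ =>
    simp [cmap, leftComm_tmul]
  | add s t hs ht =>
    simp only [tmul_add, map_add] at hs ht ⊢
    rw [hs, ht]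

theorem claim6b :
    cmap R A ∘ₗ LinearMap.lTensor A (Coalgebra.comul (R := R) (A := A)) =
      LinearMap.id := by
  have aux : ∀ x : A, cmap R A ∘ₗ (TensorProduct.mk R A (A ⊗[R] A) x) =
      (TensorProduct.mk R A A x) ∘ₗ (TensorProduct.lid R A).toLinearMap ∘ₗ
        (LinearMap.rTensor A (Coalgebra.counit (R := R) (A := A))) := by
    intro x
    apply TensorProduct.ext'
    intro n p
    simp [cmap, leftComm_tmul]
  apply TensorProduct.ext'
  intro x y
  have h := LinearMap.congr_fun (aux x) (Coalgebra.comul y)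
  simp only [LinearMap.comp_apply, TensorProduct.mk_apply] at h
  simp only [LinearMap.comp_apply, LinearMap.lTensor_tmul, LinearMap.id_apply]
  rw [h, Coalgebra.rTensor_counit_comul]
  simp

theorem counit_helper :
    ((TensorProduct.lid R R).toLinearMap ∘ₗ
        TensorProduct.map (Coalgebra.counit (R := R) (A := A)) Coalgebra.counit) ∘ₗ
      Coalgebra.comul = Coalgebra.counit := by
  apply LinearMap.ext
  intro a
  have hmap : TensorProduct.map (Coalgebra.counit (R := R) (A := A)) Coalgebra.counit =
      (LinearMap.lTensor R Coalgebra.counit) ∘ₗ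
        (LinearMap.rTensor A Coalgebra.counit) := by
    rw [LinearMap.lTensor_comp_rTensor]
  simp only [LinearMap.comp_apply, hmap]
  rw [Coalgebra.rTensor_counit_comul]
  simp

theorem unit_invariant
    (h1unit : ∀ a : A, ρ₁ a 1 = Coalgebra.counit (R := R) a • (1 : F₁))
    (h2unit : ∀ a : A, ρ₂ a 1 = Coalgebra.counit (R := R) a • (1 : F₂)) (a : A) :
    act2 R ρ₁ ρ₂ (Coalgebra.comul a) ((1 : F₁) ⊗ₜ[R] (1 : F₂)) =
      Coalgebra.counit (R := R) a • ((1 : F₁) ⊗ₜ[R] (1 : F₂)) := by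
  have e1 : (act2 R ρ₁ ρ₂).flip ((1 : F₁) ⊗ₜ[R] (1 : F₂)) =
      (((TensorProduct.lid R R).toLinearMap ∘ₗ
          TensorProduct.map (Coalgebra.counit (R := R) (A := A))
            Coalgebra.counit)).smulRight ((1 : F₁) ⊗ₜ[R] (1 : F₂)) := by
    apply TensorProduct.ext'
    intro x y
    simp [h1unit, h2unit, TensorProduct.smul_tmul', smul_smul, mul_comm]
  have h := LinearMap.congr_fun e1 (Coalgebra.comul a)
  simp only [LinearMap.flip_apply, LinearMap.smulRight_apply] at h
  rw [h]
  congr 1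
  exact LinearMap.congr_fun (counit_helper R (A := A)) a

theorem mul_invariant
    (h1cov : ∀ a : A,
      (LinearMap.mul' R F₁) ∘ₗ tensorAct R ρ₁ ρ₁ a = ρ₁ a ∘ₗ LinearMap.mul' R F₁)
    (h2cov : ∀ a : A,
      (LinearMap.mul' R F₂) ∘ₗ tensorAct R ρ₂ ρ₂ a = ρ₂ a ∘ₗ LinearMap.mul' R F₂)
    (K L : F₁ ⊗[R] F₂)
    (hK : ∀ a : A, act2 R ρ₁ ρ₂ (Coalgebra.comul a) K = Coalgebra.counit (R := R) a • K)
    (hL : ∀ a : A, act2 R ρ₁ ρ₂ (Coalgebra.comul a) L = Coalgebra.counit (R := R) a • L)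
    (a : A) :
    act2 R ρ₁ ρ₂ (Coalgebra.comul a) (opMul R K L) =
      Coalgebra.counit (R := R) a • opMul R K L := by
  have c5 : ((act2 R ρ₁ ρ₂).flip K) ∘ₗ Coalgebra.comul =
      (Coalgebra.counit (R := R) (A := A)).smulRight K :=
    LinearMap.ext fun b => by simpa using hK b
  have h1 := LinearMap.congr_fun (claim1' R ρ₁ ρ₂ h1cov h2cov K L) (Coalgebra.comul a)
  simp only [LinearMap.flip_apply, LinearMap.comp_apply] at h1
  have h2c := LinearMap.congr_fun (claim2 R ρ₁ ρ₂ K L)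
    ((TensorProduct.map Coalgebra.comul Coalgebra.comul) (Coalgebra.comul a))
  simp only [LinearMap.flip_apply, LinearMap.comp_apply] at h2c
  have h3 := LinearMap.congr_fun (claim3 R (A := A)) a
  simp only [LinearMap.comp_apply] at h3
  rw [h1, h2c, h3]
  have h4 := LinearMap.congr_fun (claim4 R ρ₁ ρ₂ K L)
    ((LinearMap.lTensor A Coalgebra.comul) (Coalgebra.comul a))
  simp only [LinearMap.comp_apply] at h4
  rw [h4]
  have hPP : lamPP R ρ₁ ρ₂ K L =
      (opMul R K) ∘ₗ ((act2 R ρ₁ ρ₂).flip L) ∘ₗ cmap R A := by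
    rw [lamPP, c5]
    exact claim6a R ρ₁ ρ₂ K L
  rw [hPP]
  have h6b := LinearMap.congr_fun (claim6b R (A := A)) (Coalgebra.comul a)
  simp only [LinearMap.comp_apply, LinearMap.id_apply] at h6b ⊢
  rw [h6b]
  simp only [LinearMap.flip_apply, hL a, map_smul]

end Aux

/-- Let `A` be a bialgebra over a commutative ring `R` and let `F₁`, `F₂` be two
`A`-module algebras (with actions `ρ₁`, `ρ₂`).  The invariants
`{K ∈ F₁ᵒᵖ ⊗[R] F₂ | ∀ a, a • K = ε(a) • K}` form a unital subalgebra of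
`F₁ᵒᵖ ⊗[R] F₂`: they contain the unit `1 ⊗ 1` and are closed under the
multiplication `(f₁ ⊗ f₂) * (g₁ ⊗ g₂) = (g₁ f₁) ⊗ (f₂ g₂)`. -/
theorem invariants_subalgebra
    {R A F₁ F₂ : Type*} [CommRing R] [Ring A] [Bialgebra R A]
    [Ring F₁] [Algebra R F₁] [Ring F₂] [Algebra R F₂]
    (ρ₁ : A →ₗ[R] F₁ →ₗ[R] F₁) (ρ₂ : A →ₗ[R] F₂ →ₗ[R] F₂)
    -- `ρ₁`, `ρ₂` are module structures:
    (h1one : ρ₁ 1 = LinearMap.id) (h1mul : ∀ a b : A, ρ₁ (a * b) = ρ₁ a ∘ₗ ρ₁ b)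
    (h2one : ρ₂ 1 = LinearMap.id) (h2mul : ∀ a b : A, ρ₂ (a * b) = ρ₂ a ∘ₗ ρ₂ b)
    -- the multiplications `F₁ ⊗ F₁ → F₁` and `F₂ ⊗ F₂ → F₂` are `A`-linear:
    (h1cov : ∀ a : A,
      (LinearMap.mul' R F₁) ∘ₗ tensorAct R ρ₁ ρ₁ a = ρ₁ a ∘ₗ LinearMap.mul' R F₁)
    (h2cov : ∀ a : A,
      (LinearMap.mul' R F₂) ∘ₗ tensorAct R ρ₂ ρ₂ a = ρ₂ a ∘ₗ LinearMap.mul' R F₂)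
    -- the units are invariant: `a • 1 = ε(a) • 1`:
    (h1unit : ∀ a : A, ρ₁ a 1 = Coalgebra.counit (R := R) a • (1 : F₁))
    (h2unit : ∀ a : A, ρ₂ a 1 = Coalgebra.counit (R := R) a • (1 : F₂)) :
    (∀ a : A, tensorAct R ρ₁ ρ₂ a ((1 : F₁) ⊗ₜ[R] (1 : F₂)) =
        Coalgebra.counit (R := R) a • ((1 : F₁) ⊗ₜ[R] (1 : F₂))) ∧
      ∀ K L : F₁ ⊗[R] F₂,
        (∀ a : A, tensorAct R ρ₁ ρ₂ a K = Coalgebra.counit (R := R) a • K) →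
        (∀ a : A, tensorAct R ρ₁ ρ₂ a L = Coalgebra.counit (R := R) a • L) →
        ∀ a : A, tensorAct R ρ₁ ρ₂ a (opMul R K L) =
          Coalgebra.counit (R := R) a • opMul R K L := by
  

  constructor
  · intro a
    rw [tensorAct_eq_act2]
    exact unit_invariant R ρ₁ ρ₂ h1unit h2unit a
  · intro K L hK hL a
    rw [tensorAct_eq_act2]
    exact mul_invariant R ρ₁ ρ₂ h1cov h2cov K L
      (fun b => by rw [← tensorAct_eq_act2]; exact hK b)
      (fun b => by rw [← tensorAct_eq_act2]; exact hL b) a
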